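/- Let X be a real symmetric positive definite n×n matrix, Y a real symmetric n×n matrix, and define the generalized Gaussian ψ_{X,Y}(x) := (πℏ)^{−n/4} (det X)^{1/4} exp(−(1/2ℏ)(X+iY)x·x) for x ∈ ℝⁿ. Then for every (x,p) ∈ ℝ^{2n}, the Wigner transform Wψ_{X,Y}(x,p) := (2πℏ)^{−n} ∫_{ℝⁿ} e^{−(i/ℏ) p·y} ψ_{X,Y}(x + y/2) conj(ψ_{X,Y}(x − y/2)) dy equals (πℏ)^{−n} exp(−(1/ℏ) G z·z), where z = (x,p) and G is the 2n×2n block matrix [[X + Y X⁻¹ Y, Y X⁻¹],[X⁻¹ Y, X⁻¹]]. -/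

import Mathlib

open Matrix Set MeasureTheory Real Complex

noncomputable section

lemma symm_mulVec_dot {n : ℕ} {M : Matrix (Fin n) (Fin n) ℝ} (hM : Mᵀ = M)
    (a b : Fin n → ℝ) : M.mulVec a ⬝ᵥ b = a ⬝ᵥ M.mulVec b := by
  nth_rewrite 1 [← hM]
  rw [Matrix.mulVec_transpose, ← Matrix.dotProduct_mulVec]

open scoped MatrixOrder in
lemma gaussian_matrix_integral {n : ℕ} {X : Matrix (Fin n) (Fin n) ℝ} (hX : X.PosDef)
    {a : ℝ} (ha : 0 < a) (t : ℂ) (c : Fin n → ℝ) :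
    ∫ y : Fin n → ℝ, Complex.exp (-(a : ℂ) * ((X.mulVec y ⬝ᵥ y : ℝ) : ℂ)
        + t * ((c ⬝ᵥ y : ℝ) : ℂ))
      = ((Real.sqrt X.det)⁻¹ : ℝ) * (((π / a : ℝ) : ℂ) ^ ((n : ℂ) / 2)) *
        Complex.exp (t ^ 2 * ((X⁻¹.mulVec c ⬝ᵥ c : ℝ) : ℂ) / (4 * a)) := by
  classical
  set S := CFC.sqrt X with hSdef
  have hS2 : S * S = X := CFC.sqrt_mul_sqrt_self X hX.posSemidef.nonneg
  have hSsymm : Sᵀ = S := by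
    have h := (CFC.sqrt_nonneg X).posSemidef.1
    rwa [Matrix.IsHermitian, Matrix.conjTranspose_eq_transpose_of_trivial] at h
  have hdetX : 0 < X.det := hX.det_pos
  have hdetS2 : S.det * S.det = X.det := by rw [← Matrix.det_mul, hS2]
  have hdetS0 : S.det ≠ 0 := fun h => by simp [h] at hdetS2; linarith
  have hSunit : IsUnit S.det := isUnit_iff_ne_zero.mpr hdetS0
  have hSinvSymm : (S⁻¹)ᵀ = S⁻¹ := by
    rw [Matrix.transpose_nonsing_inv, hSsymm]
  set c' : Fin n → ℝ := S⁻¹.mulVec c with hc'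
  set g : (Fin n → ℝ) → ℂ := fun u => Complex.exp (-((a : ℂ)) * ∑ i, ((u i : ℂ)) ^ 2
      + ∑ i, (t * (c' i : ℂ)) * (u i : ℂ)) with hg
  have key : ∀ y : Fin n → ℝ,
      Complex.exp (-(a : ℂ) * ((X.mulVec y ⬝ᵥ y : ℝ) : ℂ) + t * ((c ⬝ᵥ y : ℝ) : ℂ))
      = g (S.mulVec y) := by
    intro y
    rw [hg]
    simp only
    congr 1
    have h1 : X.mulVec y ⬝ᵥ y = ∑ i, (S.mulVec y i) ^ 2 := by
      rw [← hS2, ← Matrix.mulVec_mulVec, symm_mulVec_dot hSsymm]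
      simp [dotProduct, pow_two, mul_comm]
    have h2 : c ⬝ᵥ y = c' ⬝ᵥ S.mulVec y := by
      rw [hc', symm_mulVec_dot hSinvSymm, Matrix.mulVec_mulVec,
        Matrix.nonsing_inv_mul S hSunit, Matrix.one_mulVec]
    rw [h1, h2]
    push_cast [dotProduct, Finset.mul_sum]
    simp [neg_mul, mul_assoc]
  simp_rw [key]
  have hφ : Continuous (Matrix.toLin' S) := LinearMap.continuous_on_pi _
  have hgc : Continuous g := by
    rw [hg]; fun_prop
  have h3 : ∫ y : Fin n → ℝ, g (S.mulVec y) = ∫ y : Fin n → ℝ, g (Matrix.toLin' S y) := rfl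
  have hmap : Measure.map (Matrix.toLin' S) volume
      = ENNReal.ofReal |S.det|⁻¹ • volume := by
    rw [← abs_inv]; exact Real.map_matrix_volume_pi_eq_smul_volume_pi hdetS0
  rw [h3, ← MeasureTheory.integral_map hφ.aemeasurable hgc.aestronglyMeasurable, hmap,
    MeasureTheory.integral_smul_measure, ENNReal.toReal_ofReal (by positivity)]
  have habs : |S.det| = Real.sqrt X.det := by
    rw [← hdetS2, ← sq, Real.sqrt_sq_eq_abs]
  have hint := GaussianFourier.integral_cexp_neg_mul_sum_add (b := (a : ℂ)) (by simpa using ha)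
    (fun i => t * (c' i : ℂ))
  rw [hg] at *
  rw [hint, habs]
  have hcc : c' ⬝ᵥ c' = X⁻¹.mulVec c ⬝ᵥ c := by
    rw [hc', symm_mulVec_dot hSinvSymm, Matrix.mulVec_mulVec, ← Matrix.mul_inv_rev, hS2,
      dotProduct_comm]
  have hsum : (∑ i, (t * (c' i : ℂ)) ^ 2) = t ^ 2 * ((X⁻¹.mulVec c ⬝ᵥ c : ℝ) : ℂ) := by
    rw [← hcc]
    push_cast [dotProduct, Finset.mul_sum]
    exact Finset.sum_congr rfl (fun i _ => by ring)
  rw [hsum]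
  have hpi : (π / (a : ℂ)) = ((π / a : ℝ) : ℂ) := by push_cast; ring
  rw [hpi, Fintype.card_fin]
  rw [Complex.real_smul]
  push_cast
  ring

/-- the Wigner transform of the generalized Gaussian
`ψ_{X,Y}(x) = (πℏ)^{-n/4} (det X)^{1/4} exp(-(1/2ℏ)(X+iY)x·x)` is
`Wψ_{X,Y}(z) = (πℏ)^{-n} exp(-(1/ℏ) Gz·z)` with
`G = [[X + YX⁻¹Y, YX⁻¹],[X⁻¹Y, X⁻¹]]`. -/
theorem wigner_transform_of_generalized_gaussian
    {n : ℕ} (ℏ : ℝ) (hℏ : 0 < ℏ)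
    (X Y : Matrix (Fin n) (Fin n) ℝ) (hX : X.PosDef) (hY : Y.IsSymm)
    (ψ : (Fin n → ℝ) → ℂ)
    (hψ : ψ = fun x => (((π * ℏ) ^ (-(n : ℝ) / 4) * X.det ^ ((1 : ℝ) / 4) : ℝ) : ℂ) *
      Complex.exp (-(1 / (2 * ℏ)) *
        (((X.mulVec x ⬝ᵥ x : ℝ) : ℂ) + Complex.I * ((Y.mulVec x ⬝ᵥ x : ℝ) : ℂ))))
    (W : (Fin n → ℝ) → (Fin n → ℝ) → ℂ)
    (hW : W = fun x p => (((2 * π * ℏ) ^ (-(n : ℝ)) : ℝ) : ℂ) *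
      ∫ y : Fin n → ℝ, Complex.exp (-(Complex.I / (ℏ : ℂ)) * ((p ⬝ᵥ y : ℝ) : ℂ)) *
        ψ (x + (2⁻¹ : ℝ) • y) * (starRingEnd ℂ) (ψ (x - (2⁻¹ : ℝ) • y)))
    (G : Matrix (Fin n ⊕ Fin n) (Fin n ⊕ Fin n) ℝ)
    (hG : G = Matrix.fromBlocks (X + Y * X⁻¹ * Y) (Y * X⁻¹) (X⁻¹ * Y) X⁻¹) :
    ∀ x p : Fin n → ℝ,
      W x p = (((π * ℏ) ^ (-(n : ℝ)) *
        Real.exp (-(1 / ℏ) * (G.mulVec (Sum.elim x p) ⬝ᵥ Sum.elim x p)) : ℝ) : ℂ) := by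
  intro x p
  subst hψ hW hG
  have hh : (ℏ : ℂ) ≠ 0 := by exact_mod_cast hℏ.ne'
  set r : ℝ := (π * ℏ) ^ (-(n : ℝ) / 4) * X.det ^ ((1 : ℝ) / 4) with hr
  set b : Fin n → ℝ := Y.mulVec x + p with hb
  set a : ℝ := 1 / (4 * ℏ) with ha
  have hapos : 0 < a := by positivity
  -- pointwise integrand identity
  have hint : ∀ y : Fin n → ℝ,
      Complex.exp (-(Complex.I / (ℏ : ℂ)) * ((p ⬝ᵥ y : ℝ) : ℂ)) *
        ((r : ℂ) * Complex.exp (-(1 / (2 * (ℏ:ℂ))) *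
          (((X.mulVec (x + (2⁻¹:ℝ) • y) ⬝ᵥ (x + (2⁻¹:ℝ) • y) : ℝ) : ℂ) +
            Complex.I * ((Y.mulVec (x + (2⁻¹:ℝ) • y) ⬝ᵥ (x + (2⁻¹:ℝ) • y) : ℝ) : ℂ)))) *
        (starRingEnd ℂ) ((r : ℂ) * Complex.exp (-(1 / (2 * (ℏ:ℂ))) *
          (((X.mulVec (x - (2⁻¹:ℝ) • y) ⬝ᵥ (x - (2⁻¹:ℝ) • y) : ℝ) : ℂ) +
            Complex.I * ((Y.mulVec (x - (2⁻¹:ℝ) • y) ⬝ᵥ (x - (2⁻¹:ℝ) • y) : ℝ) : ℂ))))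
      = ((r : ℂ) * r * Complex.exp (-(1 / (ℏ:ℂ)) * ((X.mulVec x ⬝ᵥ x : ℝ) : ℂ))) *
        Complex.exp (-(a : ℂ) * ((X.mulVec y ⬝ᵥ y : ℝ) : ℂ) +
          (-(Complex.I / (ℏ : ℂ))) * ((b ⬝ᵥ y : ℝ) : ℂ)) := by
    intro y
    have hXq : X.mulVec (x + (2⁻¹:ℝ) • y) ⬝ᵥ (x + (2⁻¹:ℝ) • y)
        + X.mulVec (x - (2⁻¹:ℝ) • y) ⬝ᵥ (x - (2⁻¹:ℝ) • y)
        = 2 * (X.mulVec x ⬝ᵥ x) + (1/2) * (X.mulVec y ⬝ᵥ y) := by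
      simp only [Matrix.mulVec_add, Matrix.mulVec_sub, Matrix.mulVec_smul,
        add_dotProduct, sub_dotProduct, smul_dotProduct,
        dotProduct_add, dotProduct_sub, dotProduct_smul, smul_eq_mul]
      ring
    have hYq : Y.mulVec (x + (2⁻¹:ℝ) • y) ⬝ᵥ (x + (2⁻¹:ℝ) • y)
        - Y.mulVec (x - (2⁻¹:ℝ) • y) ⬝ᵥ (x - (2⁻¹:ℝ) • y)
        = 2 * (Y.mulVec x ⬝ᵥ y) := by
      have h1 : (Y.mulVec y) ⬝ᵥ x = (Y.mulVec x) ⬝ᵥ y := by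
        rw [symm_mulVec_dot hY y x, dotProduct_comm]
      simp only [Matrix.mulVec_add, Matrix.mulVec_sub, Matrix.mulVec_smul,
        add_dotProduct, sub_dotProduct, smul_dotProduct,
        dotProduct_add, dotProduct_sub, dotProduct_smul, smul_eq_mul]
      linear_combination h1
    have hbd : (b ⬝ᵥ y : ℝ) = Y.mulVec x ⬝ᵥ y + p ⬝ᵥ y := by
      rw [hb, add_dotProduct]
    -- compute the conjugate
    rw [map_mul (starRingEnd ℂ), ← Complex.exp_conj]
    have hconj : (starRingEnd ℂ) (-(1 / (2 * (ℏ:ℂ))) *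
          (((X.mulVec (x - (2⁻¹:ℝ) • y) ⬝ᵥ (x - (2⁻¹:ℝ) • y) : ℝ) : ℂ) +
            Complex.I * ((Y.mulVec (x - (2⁻¹:ℝ) • y) ⬝ᵥ (x - (2⁻¹:ℝ) • y) : ℝ) : ℂ)))
        = -(1 / (2 * (ℏ:ℂ))) *
          (((X.mulVec (x - (2⁻¹:ℝ) • y) ⬝ᵥ (x - (2⁻¹:ℝ) • y) : ℝ) : ℂ) -
            Complex.I * ((Y.mulVec (x - (2⁻¹:ℝ) • y) ⬝ᵥ (x - (2⁻¹:ℝ) • y) : ℝ) : ℂ)) := by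
      simp only [map_mul (starRingEnd ℂ), map_add (starRingEnd ℂ), map_neg (starRingEnd ℂ),
        map_div₀, RingHom.map_one, map_ofNat, Complex.conj_ofReal, Complex.conj_I]
      ring
    rw [hconj, Complex.conj_ofReal]
    have hXqC : ((X.mulVec (x + (2⁻¹:ℝ) • y) ⬝ᵥ (x + (2⁻¹:ℝ) • y) : ℝ) : ℂ)
        + ((X.mulVec (x - (2⁻¹:ℝ) • y) ⬝ᵥ (x - (2⁻¹:ℝ) • y) : ℝ) : ℂ)
        = 2 * ((X.mulVec x ⬝ᵥ x : ℝ) : ℂ) + 1/2 * ((X.mulVec y ⬝ᵥ y : ℝ) : ℂ) := by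
      have h := congrArg (fun t : ℝ => (t : ℂ)) hXq
      push_cast at h
      linear_combination h
    have hYqC : ((Y.mulVec (x + (2⁻¹:ℝ) • y) ⬝ᵥ (x + (2⁻¹:ℝ) • y) : ℝ) : ℂ)
        - ((Y.mulVec (x - (2⁻¹:ℝ) • y) ⬝ᵥ (x - (2⁻¹:ℝ) • y) : ℝ) : ℂ)
        = 2 * ((Y.mulVec x ⬝ᵥ y : ℝ) : ℂ) := by
      have h := congrArg (fun t : ℝ => (t : ℂ)) hYq
      push_cast at h
      linear_combination h
    have hbdC : ((b ⬝ᵥ y : ℝ) : ℂ) = ((Y.mulVec x ⬝ᵥ y : ℝ) : ℂ) + ((p ⬝ᵥ y : ℝ) : ℂ) := by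
      have h := congrArg (fun t : ℝ => (t : ℂ)) hbd
      push_cast at h
      linear_combination h
    have haC : ((a : ℝ) : ℂ) = 1 / (4 * (ℏ:ℂ)) := by
      rw [ha]; push_cast; ring
    have hexp : Complex.exp (-(Complex.I / (ℏ : ℂ)) * ((p ⬝ᵥ y : ℝ) : ℂ)) *
        Complex.exp (-(1 / (2 * (ℏ:ℂ))) *
          (((X.mulVec (x + (2⁻¹:ℝ) • y) ⬝ᵥ (x + (2⁻¹:ℝ) • y) : ℝ) : ℂ) +
            Complex.I * ((Y.mulVec (x + (2⁻¹:ℝ) • y) ⬝ᵥ (x + (2⁻¹:ℝ) • y) : ℝ) : ℂ))) *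
        Complex.exp (-(1 / (2 * (ℏ:ℂ))) *
          (((X.mulVec (x - (2⁻¹:ℝ) • y) ⬝ᵥ (x - (2⁻¹:ℝ) • y) : ℝ) : ℂ) -
            Complex.I * ((Y.mulVec (x - (2⁻¹:ℝ) • y) ⬝ᵥ (x - (2⁻¹:ℝ) • y) : ℝ) : ℂ)))
        = Complex.exp (-(1 / (ℏ:ℂ)) * ((X.mulVec x ⬝ᵥ x : ℝ) : ℂ)) *
          Complex.exp (-(a : ℂ) * ((X.mulVec y ⬝ᵥ y : ℝ) : ℂ) +
            (-(Complex.I / (ℏ : ℂ))) * ((b ⬝ᵥ y : ℝ) : ℂ)) := by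
      rw [← Complex.exp_add, ← Complex.exp_add, ← Complex.exp_add]
      congr 1
      rw [haC, hbdC]
      linear_combination (-(1/(2*(ℏ:ℂ)))) * hXqC + (-(Complex.I/(2*(ℏ:ℂ)))) * hYqC
    calc Complex.exp (-(Complex.I / (ℏ : ℂ)) * ((p ⬝ᵥ y : ℝ) : ℂ)) *
        ((r:ℂ) * Complex.exp (-(1 / (2 * (ℏ:ℂ))) *
          (((X.mulVec (x + (2⁻¹:ℝ) • y) ⬝ᵥ (x + (2⁻¹:ℝ) • y) : ℝ) : ℂ) +
            Complex.I * ((Y.mulVec (x + (2⁻¹:ℝ) • y) ⬝ᵥ (x + (2⁻¹:ℝ) • y) : ℝ) : ℂ)))) *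
        ((r:ℂ) * Complex.exp (-(1 / (2 * (ℏ:ℂ))) *
          (((X.mulVec (x - (2⁻¹:ℝ) • y) ⬝ᵥ (x - (2⁻¹:ℝ) • y) : ℝ) : ℂ) -
            Complex.I * ((Y.mulVec (x - (2⁻¹:ℝ) • y) ⬝ᵥ (x - (2⁻¹:ℝ) • y) : ℝ) : ℂ))))
        = (r:ℂ) * (r:ℂ) * (Complex.exp (-(Complex.I / (ℏ : ℂ)) * ((p ⬝ᵥ y : ℝ) : ℂ)) *
          Complex.exp (-(1 / (2 * (ℏ:ℂ))) *
            (((X.mulVec (x + (2⁻¹:ℝ) • y) ⬝ᵥ (x + (2⁻¹:ℝ) • y) : ℝ) : ℂ) +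
              Complex.I * ((Y.mulVec (x + (2⁻¹:ℝ) • y) ⬝ᵥ (x + (2⁻¹:ℝ) • y) : ℝ) : ℂ))) *
          Complex.exp (-(1 / (2 * (ℏ:ℂ))) *
            (((X.mulVec (x - (2⁻¹:ℝ) • y) ⬝ᵥ (x - (2⁻¹:ℝ) • y) : ℝ) : ℂ) -
              Complex.I * ((Y.mulVec (x - (2⁻¹:ℝ) • y) ⬝ᵥ (x - (2⁻¹:ℝ) • y) : ℝ) : ℂ)))) := by
          ring
      _ = _ := by rw [hexp]; ring
  simp only
  simp_rw [hint]
  rw [MeasureTheory.integral_const_mul,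
    gaussian_matrix_integral hX hapos (-(Complex.I/(ℏ:ℂ))) b]
  -- quadratic form identity
  have hXs : Xᵀ = X := by
    have h := hX.1
    rwa [Matrix.IsHermitian, Matrix.conjTranspose_eq_transpose_of_trivial] at h
  have hXinvS : (X⁻¹)ᵀ = X⁻¹ := by rw [Matrix.transpose_nonsing_inv, hXs]
  have hQ : (Matrix.fromBlocks (X + Y * X⁻¹ * Y) (Y * X⁻¹) (X⁻¹ * Y) X⁻¹).mulVec
        (Sum.elim x p) ⬝ᵥ Sum.elim x p
      = X.mulVec x ⬝ᵥ x + X⁻¹.mulVec b ⬝ᵥ b := by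
    rw [Matrix.fromBlocks_mulVec, sumElim_dotProduct_sumElim, hb]
    have l1 : Y.mulVec (X⁻¹.mulVec (Y.mulVec x)) ⬝ᵥ x
        = X⁻¹.mulVec (Y.mulVec x) ⬝ᵥ Y.mulVec x := by rw [symm_mulVec_dot hY]
    have l2 : Y.mulVec (X⁻¹.mulVec p) ⬝ᵥ x = X⁻¹.mulVec p ⬝ᵥ Y.mulVec x := by
      rw [symm_mulVec_dot hY]
    simp only [Matrix.add_mulVec, ← Matrix.mulVec_mulVec, add_dotProduct,
      dotProduct_add, Matrix.mulVec_add, Sum.elim_comp_inl, Sum.elim_comp_inr]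
    linear_combination l1 + l2
  rw [hQ]
  set A1 := X.mulVec x ⬝ᵥ x with hA1
  set A2 := X⁻¹.mulVec b ⬝ᵥ b with hA2
  have haC : ((a:ℝ):ℂ) = 1/(4*(ℏ:ℂ)) := by rw [ha]; push_cast; ring
  have hexp2 : Complex.exp (-(1/(ℏ:ℂ)) * (A1 : ℂ)) *
      Complex.exp ((-(Complex.I/(ℏ:ℂ)))^2 * ((A2 : ℝ) : ℂ)/(4*((a:ℝ):ℂ)))
      = ((Real.exp (-(1/ℏ) * (A1 + A2)) : ℝ) : ℂ) := by
    rw [← Complex.exp_add, Complex.ofReal_exp]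
    congr 1
    rw [haC, show (-(Complex.I/(ℏ:ℂ)))^2 = -(1/((ℏ:ℂ))^2) by
      rw [neg_sq, div_pow, Complex.I_sq]; ring]
    push_cast
    field_simp
    ring
  have hπℏ : (0:ℝ) < π*ℏ := by positivity
  have hKreal : (2*π*ℏ)^(-(n:ℝ)) * (r*r) * (Real.sqrt X.det)⁻¹ * (π/a)^((n:ℝ)/2)
      = (π*ℏ)^(-(n:ℝ)) := by
    have e2 : π/a = 4*(π*ℏ) := by rw [ha]; field_simp
    have g1 : (π*ℏ)^(-(n:ℝ)/4)*((π*ℏ)^(-(n:ℝ)/4)*(π*ℏ)^((n:ℝ)/2)) = 1 := by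
      rw [← Real.rpow_add hπℏ, ← Real.rpow_add hπℏ,
        show -(n:ℝ)/4 + (-(n:ℝ)/4 + (n:ℝ)/2) = 0 by ring, Real.rpow_zero]
    have g2 : (X.det^((1:ℝ)/4) * X.det^((1:ℝ)/4)) * (Real.sqrt X.det)⁻¹ = 1 := by
      rw [Real.sqrt_eq_rpow, ← Real.rpow_add hX.det_pos, ← Real.rpow_neg hX.det_pos.le,
        ← Real.rpow_add hX.det_pos]
      norm_num
    have h22 : (2:ℝ)^(2:ℝ) = 4 := by
      have h := Real.rpow_natCast (2:ℝ) 2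
      rw [Nat.cast_ofNat] at h
      rw [h]; norm_num
    have g3 : (2:ℝ)^(-(n:ℝ)) * (4:ℝ)^((n:ℝ)/2) = 1 := by
      rw [show (4:ℝ) = (2:ℝ)^(2:ℝ) from h22.symm,
        ← Real.rpow_mul (by norm_num : (0:ℝ) ≤ 2), ← Real.rpow_add (by norm_num : (0:ℝ) < 2),
        show -(n:ℝ) + 2 * ((n:ℝ)/2) = 0 by ring, Real.rpow_zero]
    calc (2*π*ℏ)^(-(n:ℝ)) * (r*r) * (Real.sqrt X.det)⁻¹ * (π/a)^((n:ℝ)/2)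
        = (2*(π*ℏ))^(-(n:ℝ)) * (r*r) * (Real.sqrt X.det)⁻¹ * (4*(π*ℏ))^((n:ℝ)/2) := by
          rw [e2]; ring_nf
      _ = ((2:ℝ)^(-(n:ℝ)) * (π*ℏ)^(-(n:ℝ))) * (r*r) * (Real.sqrt X.det)⁻¹ *
          ((4:ℝ)^((n:ℝ)/2) * (π*ℏ)^((n:ℝ)/2)) := by
          rw [Real.mul_rpow (by norm_num) hπℏ.le, Real.mul_rpow (by norm_num) hπℏ.le]
      _ = (π*ℏ)^(-(n:ℝ)) * (((2:ℝ)^(-(n:ℝ)) * (4:ℝ)^((n:ℝ)/2)) *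
          ((π*ℏ)^(-(n:ℝ)/4)*((π*ℏ)^(-(n:ℝ)/4)*(π*ℏ)^((n:ℝ)/2))) *
          ((X.det^((1:ℝ)/4) * X.det^((1:ℝ)/4)) * (Real.sqrt X.det)⁻¹)) := by
          rw [hr]; ring
      _ = (π*ℏ)^(-(n:ℝ)) := by rw [g1, g2, g3]; ring
  have hcp : (((π/a : ℝ):ℂ)^(((n:ℕ):ℂ)/2)) = ((((π/a)^((n:ℝ)/2) : ℝ)) : ℂ) := by
    rw [Complex.ofReal_cpow (by positivity) ((n:ℝ)/2)]
    push_cast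
    ring_nf
  calc (((2 * π * ℏ) ^ (-(n : ℝ)) : ℝ) : ℂ) *
        ((r:ℂ) * r * Complex.exp (-(1/(ℏ:ℂ)) * (A1 : ℂ)) *
          ((((Real.sqrt X.det)⁻¹ : ℝ):ℂ) * (((π/a : ℝ):ℂ)^(((n:ℕ):ℂ)/2)) *
            Complex.exp ((-(Complex.I/(ℏ:ℂ)))^2 * ((A2 : ℝ) : ℂ)/(4*((a:ℝ):ℂ)))))
      = ((((2 * π * ℏ) ^ (-(n : ℝ)) * (r*r) * (Real.sqrt X.det)⁻¹ *
          (π/a)^((n:ℝ)/2) : ℝ)) : ℂ) *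
        (Complex.exp (-(1/(ℏ:ℂ)) * (A1 : ℂ)) *
          Complex.exp ((-(Complex.I/(ℏ:ℂ)))^2 * ((A2 : ℝ) : ℂ)/(4*((a:ℝ):ℂ)))) := by
        rw [hcp]; push_cast; ring
    _ = (((π*ℏ)^(-(n:ℝ)) : ℝ) : ℂ) * ((Real.exp (-(1/ℏ) * (A1 + A2)) : ℝ) : ℂ) := by
        rw [hKreal, hexp2]
    _ = _ := by push_cast; ring
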